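/- Let G be an étale groupoid with slice action (Bis G, G⁽⁰⁾, γ^G), where for U ∈ Bis G the partial homeomorphism γ^G_U : d(U) → r(U) is r|_U ∘ (d|_U)⁻¹. Then the map ω_G : Bis G ⋉_{γ^G} G⁽⁰⁾ → G sending the class [U, u] to the unique element g ∈ U with d(g) = u is a well-defined groupoid isomorphism and a homeomorphism. -/

import Mathlib

/-- A groupoid structure on the type `A` of arrows, following the definition with a
unit space `unit ⊆ A`, domain and range maps `d, r`, a multiplication (total function,
only constrained on composable pairs) and an inverse map. -/
structure Gpd (A : Type*) where
  unit : Set A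
  d : A → A
  r : A → A
  mul : A → A → A
  inv : A → A
  d_mem : ∀ g, d g ∈ unit
  r_mem : ∀ g, r g ∈ unit
  d_unit : ∀ u ∈ unit, d u = u
  r_unit : ∀ u ∈ unit, r u = u
  left_unit : ∀ g, mul (r g) g = g
  right_unit : ∀ g, mul g (d g) = g
  r_mul : ∀ g' g, d g' = r g → r (mul g' g) = r g'
  d_mul : ∀ g' g, d g' = r g → d (mul g' g) = d g
  mul_assoc : ∀ g'' g' g, d g'' = r g' → d g' = r g →
    mul g'' (mul g' g) = mul (mul g'' g') g
  d_inv : ∀ g, d (inv g) = r g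
  r_inv : ∀ g, r (inv g) = d g
  mul_inv : ∀ g, mul g (inv g) = r g
  inv_mul : ∀ g, mul (inv g) g = d g

namespace Gpd

variable {A B C : Type*}

/-- The fiber `G_u` over a point `u`: arrows with domain `u`. -/
def fiber (G : Gpd A) (u : A) : Set A := {g | G.d g = u}

/-- The product `UV` of two subsets of a groupoid: products over composable pairs. -/
def setMul (G : Gpd A) (U V : Set A) : Set A :=
  {g | ∃ u ∈ U, ∃ v ∈ V, G.d u = G.r v ∧ g = G.mul u v}

/-- The inverse `U⁻¹` of a subset of a groupoid. -/
def setInv (G : Gpd A) (U : Set A) : Set A := G.inv '' U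

/-- A subset of a groupoid is a bisection if both `d` and `r` are injective on it. -/
def IsBisection (G : Gpd A) (U : Set A) : Prop :=
  Set.InjOn G.d U ∧ Set.InjOn G.r U

/-- A groupoid homomorphism: sends composable pairs to composable pairs and
preserves the multiplication. -/
def IsHom (K : Gpd A) (G : Gpd B) (φ : A → B) : Prop :=
  ∀ g' g : A, K.d g' = K.r g →
    G.d (φ g') = G.r (φ g) ∧ φ (K.mul g' g) = G.mul (φ g') (φ g)

/-- Each fiber restriction `φ_u : K_u → G_{φ(u)}` is injective. -/
def FibInj (K : Gpd A) (φ : A → B) : Prop :=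
  ∀ u ∈ K.unit, Set.InjOn φ (K.fiber u)

/-- Each fiber restriction `φ_u : K_u → G_{φ(u)}` is surjective. -/
def FibSurj (K : Gpd A) (G : Gpd B) (φ : A → B) : Prop :=
  ∀ u ∈ K.unit, ∀ h : B, G.d h = φ u → ∃ g ∈ K.fiber u, φ g = h

/-- Fibrewise bijective groupoid homomorphism. -/
def FibBij (K : Gpd A) (G : Gpd B) (φ : A → B) : Prop :=
  FibInj K φ ∧ FibSurj K G φ

end Gpd

namespace Gpd

variable {A B : Type*}

/-- A topological groupoid: the inverse map, the domain and range maps, and the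
multiplication (on the set of composable pairs) are continuous. -/
def IsTopGpd [TopologicalSpace A] (G : Gpd A) : Prop :=
  Continuous G.inv ∧ Continuous G.d ∧ Continuous G.r ∧
    Continuous (fun p : {p : A × A // G.d p.1 = G.r p.2} => G.mul p.1.1 p.1.2)

/-- An étale groupoid: a topological groupoid whose domain map is a local
homeomorphism onto open subsets of the unit space (with its subspace topology). -/
def IsEtale [TopologicalSpace A] (G : Gpd A) : Prop :=
  IsTopGpd G ∧ ∀ g : A, ∃ V : Set A, IsOpen V ∧ g ∈ V ∧ Set.InjOn G.d V ∧
    ∀ O : Set A, O ⊆ V → IsOpen O → ∃ W : Set A, IsOpen W ∧ G.d '' O = W ∩ G.unit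

/-- The set of open bisections of a groupoid. -/
def Bis [TopologicalSpace A] (G : Gpd A) : Set (Set A) :=
  {U : Set A | IsOpen U ∧ G.IsBisection U}

end Gpd

namespace Gpd

variable {A : Type*} [TopologicalSpace A]

/-- Representatives of arrows of the transformation groupoid `Bis G ⋉ G⁽⁰⁾` of the slice
action: pairs `(U, u)` of an open bisection `U` and a point `u ∈ d(U) = D^{γ}_U`. -/
def SlicePt (G : Gpd A) : Type _ :=
  {p : Set A × A // IsOpen p.1 ∧ G.IsBisection p.1 ∧ p.2 ∈ G.d '' p.1}

/-- The relation defining the transformation groupoid: `(U,u) ∼ (V,v)` iff `u = v` and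
there is an idempotent `W` of `Bis G` (an open subset of the unit space) with `u ∈ W` and
`U·W = V·W`. -/
def SliceRel (G : Gpd A) (p q : SlicePt G) : Prop :=
  p.1.2 = q.1.2 ∧ ∃ W : Set A, IsOpen W ∧ W ⊆ G.unit ∧ p.1.2 ∈ W ∧
    G.setMul p.1.1 W = G.setMul q.1.1 W

/-- The generating open sets `[U, O]` of the topology of the transformation groupoid,
for `U` an open bisection and `O` an open subset of `d(U)`. -/
def SliceBasic (G : Gpd A) : Set (Set (Quot (SliceRel G))) :=
  {B | ∃ U O : Set A, IsOpen U ∧ G.IsBisection U ∧ IsOpen O ∧ O ⊆ G.d '' U ∧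
    B = {k | ∃ (u : A) (_ : u ∈ O)
      (hp : IsOpen U ∧ G.IsBisection U ∧ u ∈ G.d '' U),
      k = Quot.mk (SliceRel G) ⟨(U, u), hp⟩}}

/-- The topology of the transformation groupoid of the slice action. -/
instance sliceTop (G : Gpd A) : TopologicalSpace (Quot (SliceRel G)) :=
  TopologicalSpace.generateFrom (SliceBasic G)

/-! ### Auxiliary lemmas -/

variable (G : Gpd A)

set_option linter.unusedSectionVars false in
lemma inv_inv' (g : A) : G.inv (G.inv g) = g := by
  calc G.inv (G.inv g)
      = G.mul (G.r (G.inv (G.inv g))) (G.inv (G.inv g)) := (G.left_unit _).symm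
    _ = G.mul (G.mul g (G.inv g)) (G.inv (G.inv g)) := by
        rw [G.r_inv, G.d_inv, G.mul_inv]
    _ = G.mul g (G.mul (G.inv g) (G.inv (G.inv g))) :=
        (G.mul_assoc g (G.inv g) (G.inv (G.inv g)) (G.r_inv g).symm
          (G.r_inv (G.inv g)).symm).symm
    _ = G.mul g (G.d g) := by rw [G.mul_inv, G.r_inv]
    _ = g := G.right_unit g

/-- Around every arrow there is an open bisection with the étale image property. -/
lemma exists_openBisection (hG : G.IsEtale) (g : A) :
    ∃ U : Set A, IsOpen U ∧ G.IsBisection U ∧ g ∈ U ∧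
      ∀ O : Set A, O ⊆ U → IsOpen O → ∃ W : Set A, IsOpen W ∧ G.d '' O = W ∩ G.unit := by
  obtain ⟨V1, hV1o, hgV1, hV1i, hV1img⟩ := hG.2 g
  obtain ⟨V2, hV2o, hgV2, hV2i, -⟩ := hG.2 (G.inv g)
  refine ⟨V1 ∩ G.inv ⁻¹' V2, hV1o.inter (hV2o.preimage hG.1.1),
    ⟨hV1i.mono Set.inter_subset_left, ?_⟩, ⟨hgV1, hgV2⟩,
    fun O hO hOo => hV1img O (hO.trans Set.inter_subset_left) hOo⟩
  intro a ha b hb hr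
  have h1 : G.d (G.inv a) = G.d (G.inv b) := by rw [G.d_inv, G.d_inv, hr]
  have h2 : G.inv a = G.inv b := hV2i ha.2 hb.2 h1
  calc a = G.inv (G.inv a) := (G.inv_inv' a).symm
    _ = G.inv (G.inv b) := by rw [h2]
    _ = b := G.inv_inv' b

set_option linter.unusedSectionVars false in
lemma setMul_subunit (U W : Set A) (hW : W ⊆ G.unit) :
    G.setMul U W = {a | a ∈ U ∧ G.d a ∈ W} := by
  ext x
  constructor
  · rintro ⟨a, ha, w, hw, hdw, rfl⟩
    have hwu : w ∈ G.unit := hW hw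
    have hda : G.d a = w := by rw [hdw, G.r_unit w hwu]
    have hx : G.mul a w = a := by rw [← hda, G.right_unit]
    rw [hx]
    exact ⟨ha, by rw [hda]; exact hw⟩
  · rintro ⟨ha, hd⟩
    exact ⟨x, ha, G.d x, hd, (G.r_unit (G.d x) (G.d_mem x)).symm,
      (G.right_unit x).symm⟩

/-- The unit space of an étale groupoid is open. -/
lemma unit_isOpen (hG : G.IsEtale) : IsOpen G.unit := by
  rw [isOpen_iff_forall_mem_open]
  intro u hu
  obtain ⟨U, hUo, hUb, huU, hImg⟩ := G.exists_openBisection hG u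
  obtain ⟨W, hWo, hW⟩ := hImg U subset_rfl hUo
  classical
  set σ : A → A := fun x => if h : ∃ a ∈ U, G.d a = G.r x then h.choose else x with hσdef
  have hσ_spec : ∀ x, G.r x ∈ G.d '' U → σ x ∈ U ∧ G.d (σ x) = G.r x := by
    intro x hx
    obtain ⟨a, ha, hda⟩ := hx
    have h : ∃ a ∈ U, G.d a = G.r x := ⟨a, ha, hda⟩
    simp only [hσdef, dif_pos h]
    exact ⟨h.choose_spec.1, h.choose_spec.2⟩
  set Ω : Set A := U ∩ G.r ⁻¹' W with hΩdef
  have hΩo : IsOpen Ω := hUo.inter (hWo.preimage hG.1.2.2.1)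
  have hrmem : ∀ x ∈ Ω, G.r x ∈ G.d '' U := fun x hx => by
    rw [hW]; exact ⟨hx.2, G.r_mem x⟩
  have hσc : ContinuousOn σ Ω := by
    rw [continuousOn_iff]
    intro x hx t ht hxt
    obtain ⟨hσU, hσd⟩ := hσ_spec x (hrmem x hx)
    obtain ⟨W1, hW1o, hW1⟩ := hImg (t ∩ U) Set.inter_subset_right (ht.inter hUo)
    refine ⟨G.r ⁻¹' W1, hW1o.preimage hG.1.2.2.1, ?_, ?_⟩
    · have hmem : G.r x ∈ G.d '' (t ∩ U) := ⟨σ x, ⟨hxt, hσU⟩, hσd⟩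
      rw [hW1] at hmem
      exact hmem.1
    · rintro y ⟨hy1, hy2⟩
      have hry : G.r y ∈ G.d '' (t ∩ U) := by
        rw [hW1]; exact ⟨hy1, G.r_mem y⟩
      obtain ⟨b, hb, hdb⟩ := hry
      obtain ⟨hσyU, hσyd⟩ := hσ_spec y (hrmem y hy2)
      have hσyb : σ y = b := hUb.1 hσyU hb.2 (by rw [hσyd, hdb])
      exact Set.mem_preimage.mpr (hσyb ▸ hb.1)
  have hcomp : ∀ g : Ω, G.d (σ g.1) = G.r g.1 := fun g => (hσ_spec g.1 (hrmem g.1 g.2)).2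
  have hFc : Continuous (fun g : Ω => G.mul (σ g.1) g.1) := by
    have hj : Continuous (fun g : Ω =>
        (⟨(σ g.1, g.1), hcomp g⟩ : {p : A × A // G.d p.1 = G.r p.2})) :=
      Continuous.subtype_mk (hσc.restrict.prodMk continuous_subtype_val) _
    exact hG.1.2.2.2.comp hj
  have hSo : IsOpen ((fun g : Ω => G.mul (σ g.1) g.1) ⁻¹' U) := hUo.preimage hFc
  refine ⟨Subtype.val '' ((fun g : Ω => G.mul (σ g.1) g.1) ⁻¹' U), ?_, hΩo.isOpenMap_subtype_val _ hSo, ?_⟩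
  · rintro x ⟨⟨g, hgΩ⟩, hgS, rfl⟩
    obtain ⟨hσU, hσd⟩ := hσ_spec g (hrmem g hgΩ)
    have hmul : G.mul (σ g) g ∈ U := hgS
    have hra : G.r (G.mul (σ g) g) = G.r (σ g) := G.r_mul (σ g) g hσd
    have heq : G.mul (σ g) g = σ g := hUb.2 hmul hσU hra
    have h1 : g = G.d (σ g) := by
      calc g = G.mul (G.r g) g := (G.left_unit g).symm
        _ = G.mul (G.d (σ g)) g := by rw [hσd]
        _ = G.mul (G.mul (G.inv (σ g)) (σ g)) g := by rw [G.inv_mul]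
        _ = G.mul (G.inv (σ g)) (G.mul (σ g) g) :=
            (G.mul_assoc (G.inv (σ g)) (σ g) g (G.d_inv (σ g)) hσd).symm
        _ = G.mul (G.inv (σ g)) (σ g) := by rw [heq]
        _ = G.d (σ g) := G.inv_mul (σ g)
    show g ∈ G.unit
    rw [h1]
    exact G.d_mem (σ g)
  · have hdu : G.d u = u := G.d_unit u hu
    have hru : G.r u = u := G.r_unit u hu
    have huΩ : u ∈ Ω := by
      refine ⟨huU, ?_⟩
      have hm : G.r u ∈ G.d '' U := ⟨u, huU, by rw [hdu, hru]⟩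
      rw [hW] at hm
      exact hm.1
    refine ⟨⟨u, huΩ⟩, ?_, rfl⟩
    obtain ⟨hσU, hσd⟩ := hσ_spec u (hrmem u huΩ)
    have hσu : σ u = u := hUb.1 hσU huU (by rw [hσd, hru, hdu])
    show G.mul (σ u) u ∈ U
    have hmu : G.mul u u = u := by
      have h := G.left_unit u
      rwa [hru] at h
    rw [hσu, hmu]
    exact huU

/-- `ω` on representatives: the chosen element of `U` with domain `u`. -/
noncomputable def omegaP (p : SlicePt G) : A := p.2.2.2.choose

lemma omegaP_mem (p : SlicePt G) : G.omegaP p ∈ p.1.1 := p.2.2.2.choose_spec.1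

lemma omegaP_d (p : SlicePt G) : G.d (G.omegaP p) = p.1.2 := p.2.2.2.choose_spec.2

lemma omegaP_eq (p : SlicePt G) {g : A} (hg : g ∈ p.1.1) (hd : G.d g = p.1.2) :
    G.omegaP p = g :=
  p.2.2.1.1 (G.omegaP_mem p) hg (by rw [G.omegaP_d, hd])

lemma omegaP_rel {p q : SlicePt G} (h : SliceRel G p q) : G.omegaP p = G.omegaP q := by
  obtain ⟨hpt, W, hWo, hWu, hmem, hWeq⟩ := h
  have hg : G.omegaP p ∈ p.1.1 := G.omegaP_mem p
  have hd : G.d (G.omegaP p) = p.1.2 := G.omegaP_d p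
  have hgm : G.omegaP p ∈ G.setMul p.1.1 W := by
    rw [G.setMul_subunit _ _ hWu]
    exact ⟨hg, by rw [hd]; exact hmem⟩
  rw [hWeq, G.setMul_subunit _ _ hWu] at hgm
  exact (G.omegaP_eq q hgm.1 (by rw [hd, hpt])).symm

lemma rel_of_omegaP (hG : G.IsEtale) {p q : SlicePt G} (h : G.omegaP p = G.omegaP q) :
    SliceRel G p q := by
  have hgp : G.omegaP p ∈ p.1.1 := G.omegaP_mem p
  have hgq : G.omegaP p ∈ q.1.1 := by rw [h]; exact G.omegaP_mem q
  have hdp : G.d (G.omegaP p) = p.1.2 := G.omegaP_d p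
  have hdq : G.d (G.omegaP p) = q.1.2 := by rw [h]; exact G.omegaP_d q
  obtain ⟨V, hVo, hgV, hVi, hVimg⟩ := hG.2 (G.omegaP p)
  set O : Set A := p.1.1 ∩ q.1.1 ∩ V with hOdef
  have hOo : IsOpen O := ((p.2.1.inter q.2.1).inter hVo)
  obtain ⟨W0, hW0o, hW0⟩ := hVimg O (fun x hx => hx.2) hOo
  have hWu : G.d '' O ⊆ G.unit := by
    rintro x ⟨b, -, rfl⟩
    exact G.d_mem b
  refine ⟨by rw [← hdp, ← hdq], G.d '' O, by rw [hW0]; exact hW0o.inter (G.unit_isOpen hG),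
    hWu, ⟨G.omegaP p, ⟨⟨hgp, hgq⟩, hgV⟩, hdp⟩, ?_⟩
  rw [G.setMul_subunit _ _ hWu, G.setMul_subunit _ _ hWu]
  ext a
  constructor
  · rintro ⟨ha, hda⟩
    obtain ⟨b, hb, hdb⟩ := hda
    have hab : a = b := p.2.2.1.1 ha hb.1.1 hdb.symm
    subst hab
    exact ⟨hb.1.2, ⟨a, hb, hdb⟩⟩
  · rintro ⟨ha, hda⟩
    obtain ⟨b, hb, hdb⟩ := hda
    have hab : a = b := q.2.2.1.1 ha hb.1.2 hdb.symm
    subst hab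
    exact ⟨hb.1.1, ⟨a, hb, hdb⟩⟩


/-- For an étale groupoid `G`, the map `ω_G : Bis G ⋉_{γ^G} G⁽⁰⁾ → G` sending the class
`[U, u]` to the unique `g ∈ U` with `d(g) = u` is a well-defined groupoid isomorphism
and a homeomorphism: there is a map `ω` on the quotient whose value on each class `[U,u]`
is an element of `U` with domain `u` (well-definedness), which is bijective, preserves
the groupoid multiplication (`ω([V][U,u]) = ω([V]) ω([U,u])` for composable classes),
and is continuous and open. -/
theorem slice_transformation_iso (G : Gpd A) (hG : G.IsEtale) :
    ∃ ω : Quot (SliceRel G) → A,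
      (∀ p : SlicePt G,
        ω (Quot.mk (SliceRel G) p) ∈ p.1.1 ∧
        G.d (ω (Quot.mk (SliceRel G) p)) = p.1.2) ∧
      Function.Bijective ω ∧
      (∀ p q : SlicePt G,
        ∀ hpq : IsOpen (G.setMul p.1.1 q.1.1) ∧ G.IsBisection (G.setMul p.1.1 q.1.1) ∧
          q.1.2 ∈ G.d '' (G.setMul p.1.1 q.1.1),
        p.1.2 = G.r (ω (Quot.mk (SliceRel G) q)) →
        ω (Quot.mk (SliceRel G) ⟨(G.setMul p.1.1 q.1.1, q.1.2), hpq⟩) =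
          G.mul (ω (Quot.mk (SliceRel G) p)) (ω (Quot.mk (SliceRel G) q))) ∧
      Continuous ω ∧ IsOpenMap ω := by
  classical
  set ω : Quot (SliceRel G) → A := Quot.lift (G.omegaP) (fun _ _ h => G.omegaP_rel h) with hωdef
  have hωmk : ∀ p : SlicePt G, ω (Quot.mk (SliceRel G) p) = G.omegaP p := fun p => rfl
  have hinj : Function.Injective ω := by
    intro k1 k2 h
    obtain ⟨p, rfl⟩ := Quot.exists_rep k1
    obtain ⟨q, rfl⟩ := Quot.exists_rep k2
    rw [hωmk, hωmk] at h
    exact Quot.sound (G.rel_of_omegaP hG h)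
  have hsurj : Function.Surjective ω := by
    intro g
    obtain ⟨U, hUo, hUb, hgU, -⟩ := G.exists_openBisection hG g
    refine ⟨Quot.mk (SliceRel G) ⟨(U, G.d g), hUo, hUb, ⟨g, hgU, rfl⟩⟩, ?_⟩
    erw [hωmk]
    exact G.omegaP_eq _ hgU rfl
  have hbasic : ∀ B ∈ SliceBasic G, IsOpen B := fun B hB =>
    (TopologicalSpace.GenerateOpen.basic B hB : TopologicalSpace.GenerateOpen (SliceBasic G) B)
  refine ⟨ω, fun p => ⟨G.omegaP_mem p, G.omegaP_d p⟩, ⟨hinj, hsurj⟩, ?_, ?_, ?_⟩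
  · -- multiplicativity
    intro p q hpq hr
    erw [hωmk, hωmk, hωmk]
    rw [hωmk] at hr
    have hab : G.d (G.omegaP p) = G.r (G.omegaP q) := by rw [G.omegaP_d p]; exact hr
    have hm : G.mul (G.omegaP p) (G.omegaP q) ∈ G.setMul p.1.1 q.1.1 :=
      ⟨G.omegaP p, G.omegaP_mem p, G.omegaP q, G.omegaP_mem q, hab, rfl⟩
    have hd : G.d (G.mul (G.omegaP p) (G.omegaP q)) = q.1.2 := by
      rw [G.d_mul _ _ hab, G.omegaP_d q]
    exact G.omegaP_eq _ hm hd
  · -- continuity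
    rw [continuous_def]
    intro O hO
    rw [isOpen_iff_forall_mem_open]
    intro k hk
    obtain ⟨p, rfl⟩ := Quot.exists_rep k
    have hgO : G.omegaP p ∈ O := hk
    obtain ⟨V, hVo, hgV, hVi, hVimg⟩ := hG.2 (G.omegaP p)
    set O1 : Set A := O ∩ p.1.1 ∩ V with hO1def
    have hO1o : IsOpen O1 := (hO.inter p.2.1).inter hVo
    have hO1b : G.IsBisection O1 :=
      ⟨p.2.2.1.1.mono (fun x hx => hx.1.2), p.2.2.1.2.mono (fun x hx => hx.1.2)⟩
    obtain ⟨W0, hW0o, hW0⟩ := hVimg O1 (fun x hx => hx.2) hO1o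
    have hgO1 : G.omegaP p ∈ O1 := ⟨⟨hgO, G.omegaP_mem p⟩, hgV⟩
    have hO'o : IsOpen (G.d '' O1) := by rw [hW0]; exact hW0o.inter (G.unit_isOpen hG)
    refine ⟨{k | ∃ (u : A) (_ : u ∈ G.d '' O1)
      (hp : IsOpen O1 ∧ G.IsBisection O1 ∧ u ∈ G.d '' O1),
      k = Quot.mk (SliceRel G) ⟨(O1, u), hp⟩}, ?_, ?_, ?_⟩
    · rintro k ⟨u, hu, hp, rfl⟩
      show ω (Quot.mk (SliceRel G) ⟨(O1, u), hp⟩) ∈ O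
      erw [hωmk]
      exact (G.omegaP_mem (⟨(O1, u), hp⟩ : SlicePt G)).1.1
    · exact hbasic _ ⟨O1, G.d '' O1, hO1o, hO1b, hO'o, subset_rfl, rfl⟩
    · have hp' : IsOpen O1 ∧ G.IsBisection O1 ∧ p.1.2 ∈ G.d '' O1 :=
        ⟨hO1o, hO1b, ⟨G.omegaP p, hgO1, G.omegaP_d p⟩⟩
      refine ⟨p.1.2, ⟨G.omegaP p, hgO1, G.omegaP_d p⟩, hp', ?_⟩
      refine Quot.sound (G.rel_of_omegaP hG ?_)
      exact (G.omegaP_eq (⟨(O1, p.1.2), hp'⟩ : SlicePt G) hgO1 (G.omegaP_d p)).symm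
  · -- openness
    intro s hs
    have hs' : TopologicalSpace.GenerateOpen (SliceBasic G) s := hs
    clear hs
    induction hs' with
    | basic B hB =>
      obtain ⟨U, O', hUo, hUb, hO'o, hO'sub, rfl⟩ := hB
      have himg : ω '' {k | ∃ (u : A) (_ : u ∈ O')
          (hp : IsOpen U ∧ G.IsBisection U ∧ u ∈ G.d '' U),
          k = Quot.mk (SliceRel G) ⟨(U, u), hp⟩} = U ∩ G.d ⁻¹' O' := by
        ext a
        constructor
        · rintro ⟨k, ⟨u, hu, hp, rfl⟩, rfl⟩
          erw [hωmk]
          refine ⟨G.omegaP_mem (⟨(U, u), hp⟩ : SlicePt G), ?_⟩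
          show G.d (G.omegaP (⟨(U, u), hp⟩ : SlicePt G)) ∈ O'
          erw [G.omegaP_d]
          exact hu
        · rintro ⟨haU, haO⟩
          have hp : IsOpen U ∧ G.IsBisection U ∧ G.d a ∈ G.d '' U :=
            ⟨hUo, hUb, ⟨a, haU, rfl⟩⟩
          refine ⟨Quot.mk (SliceRel G) ⟨(U, G.d a), hp⟩, ⟨G.d a, haO, hp, rfl⟩, ?_⟩
          erw [hωmk]
          exact G.omegaP_eq _ haU rfl
      rw [himg]
      exact hUo.inter (hO'o.preimage hG.1.2.1)
    | univ =>
      rw [Set.image_univ, hsurj.range_eq]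
      exact isOpen_univ
    | inter s t _ _ ihs iht =>
      rw [Set.image_inter hinj]
      exact ihs.inter iht
    | sUnion S _ ih =>
      rw [Set.image_sUnion]
      refine isOpen_sUnion ?_
      rintro t ⟨u, hu, rfl⟩
      exact ih u hu


end Gpd
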